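/- Let p be an odd prime, m an odd positive integer, q = p^m, and Tr : F_q → F_p the trace map. Let u be a positive integer with gcd(m, u) = v such that m/v is odd (automatic since m is odd). Then the number of x in F_q with Tr(x^(p^u + 1)) = 0 equals p^(m-1). -/

import Mathlib

open Finset


lemma aux_gcd (p m u : ℕ) (hp : Odd p) (hp1 : 1 < p) (hm : Odd m) (hu : 0 < u) :
    Nat.gcd (p ^ u + 1) (p ^ m - 1) = 2 := by
  have hpm1 : 1 ≤ p ^ m := Nat.one_le_pow _ _ (by omega)
  have h2a : 2 ∣ p ^ u + 1 := by
    have : Odd (p ^ u) := hp.pow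
    obtain ⟨k, hk⟩ := this; omega
  have h2b : 2 ∣ p ^ m - 1 := by
    have : Odd (p ^ m) := hp.pow
    obtain ⟨k, hk⟩ := this; omega
  set d := Nat.gcd (p ^ u + 1) (p ^ m - 1) with hd
  have h2d : 2 ∣ d := Nat.dvd_gcd h2a h2b
  have hdpos : 0 < d := Nat.gcd_pos_of_pos_left _ (by positivity)
  have h1 : (p : ZMod d) ^ u = -1 := by
    have h0 : ((p ^ u + 1 : ℕ) : ZMod d) = 0 :=
      (ZMod.natCast_eq_zero_iff _ _).mpr (Nat.gcd_dvd_left _ _)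
    push_cast at h0
    linear_combination h0
  have h2 : (p : ZMod d) ^ m = 1 := by
    have h0 : ((p ^ m - 1 : ℕ) : ZMod d) = 0 :=
      (ZMod.natCast_eq_zero_iff _ _).mpr (Nat.gcd_dvd_right _ _)
    rw [Nat.cast_sub hpm1] at h0
    push_cast at h0
    linear_combination h0
  set t := orderOf ((p : ZMod d)) with ht
  have htm : t ∣ m := orderOf_dvd_of_pow_eq_one h2
  have ht2u : t ∣ 2 * u := by
    apply orderOf_dvd_of_pow_eq_one
    rw [mul_comm, pow_mul, h1, neg_one_sq]
  have htu : t ∣ u := by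
    have h3 : t ∣ Nat.gcd m (2 * u) := Nat.dvd_gcd htm ht2u
    have hcop : Nat.Coprime 2 m := (Nat.coprime_two_left).mpr hm
    rw [Nat.gcd_comm m (2 * u), Nat.Coprime.gcd_mul_left_cancel _ hcop, Nat.gcd_comm] at h3
    exact h3.trans (Nat.gcd_dvd_right m u)
  have hpu1 : (p : ZMod d) ^ u = 1 := orderOf_dvd_iff_pow_eq_one.mp htu
  have h4 : (2 : ZMod d) = 0 := by
    rw [show (2 : ZMod d) = 1 - (-1) by ring, ← h1, hpu1, sub_self]
  have h5 : d ∣ 2 := by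
    have : ((2 : ℕ) : ZMod d) = 0 := by exact_mod_cast h4
    exact (ZMod.natCast_eq_zero_iff _ _).mp this
  exact Nat.dvd_antisymm h5 h2d

section
variable (p m : ℕ) [Fact p.Prime] (F : Type*) [Field F] [Fintype F] [Algebra (ZMod p) F]

lemma aux_ringChar (hp : Odd p) : ringChar F ≠ 2 := by
  haveI : CharP F p := charP_of_injective_algebraMap (algebraMap (ZMod p) F).injective p
  rw [ringChar.eq F p]
  rcases hp with ⟨k, hk⟩; omega

lemma aux_sq_iff (hp : Odd p) (hF : Fintype.card F = p ^ m) {y : F} (hy : y ≠ 0) :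
    IsSquare y ↔ y ^ ((p ^ m - 1) / 2) = 1 := by
  have h := FiniteField.isSquare_iff (aux_ringChar p F hp) hy
  rw [hF] at h
  have hodd : Odd (p ^ m) := hp.pow
  have he : p ^ m / 2 = (p ^ m - 1) / 2 := by obtain ⟨k, hk⟩ := hodd; omega
  rwa [he] at h

lemma aux_ns (hp : Odd p) (hm : Odd m) (hF : Fintype.card F = p ^ m) :
    ∃ c : ZMod p, c ≠ 0 ∧ (algebraMap (ZMod p) F c) ≠ 0 ∧
      (algebraMap (ZMod p) F c) ^ ((p ^ m - 1) / 2) = -1 := by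
  have hp2 : p ≠ 2 := by rcases hp with ⟨k, hk⟩; omega
  obtain ⟨c, hc⟩ := FiniteField.exists_nonsquare (F := ZMod p)
    (by rw [ZMod.ringChar_zmod_n]; exact hp2)
  have hc0 : c ≠ 0 := by rintro rfl; exact hc (IsSquare.zero)
  have hcpow : c ^ (p / 2) = -1 := by
    have hd := FiniteField.pow_dichotomy (F := ZMod p)
      (by rw [ZMod.ringChar_zmod_n]; exact hp2) hc0
    rw [ZMod.card] at hd
    exact hd.resolve_left (fun h => hc ((ZMod.euler_criterion p hc0).mpr h))
  -- geometric sum facts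
  have hp1 : 1 ≤ p := (Fact.out : p.Prime).one_le
  set s := ∑ i ∈ Finset.range m, p ^ i with hs
  have hgeom : (p - 1) * s = p ^ m - 1 := by
    have hZ := geom_sum_mul (p : ℤ) m
    have hpm1 : 1 ≤ p ^ m := Nat.one_le_pow _ _ (by omega)
    have hcast : (((p - 1) * s : ℕ) : ℤ) = ((p ^ m - 1 : ℕ) : ℤ) := by
      rw [hs]
      push_cast [Nat.cast_sub hp1, Nat.cast_sub hpm1]
      linear_combination hZ
    exact_mod_cast hcast
  have hsodd : Odd s := by
    have h1 : ∀ i ∈ Finset.range m, p ^ i % 2 = 1 := fun i _ => Nat.odd_iff.mp hp.pow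
    have : s % 2 = m % 2 := by
      calc s % 2 = (∑ i ∈ Finset.range m, p ^ i % 2) % 2 := Finset.sum_nat_mod _ _ _
        _ = (∑ _i ∈ Finset.range m, 1) % 2 := by rw [Finset.sum_congr rfl h1]
        _ = m % 2 := by simp
    rw [Nat.odd_iff, this, ← Nat.odd_iff]; exact hm
  obtain ⟨k, hk⟩ := hp
  have he : (p ^ m - 1) / 2 = (p / 2) * s := by
    have h2 : p - 1 = 2 * k := by omega
    have h3 : p ^ m - 1 = 2 * (k * s) := by rw [← hgeom, h2]; ring
    have h4 : p / 2 = k := by omega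
    rw [h4]
    omega
  refine ⟨c, hc0, ?_, ?_⟩
  · exact (map_ne_zero _).mpr hc0
  · rw [he, pow_mul, ← map_pow, hcpow, map_neg, map_one]
    exact hsodd.neg_one_pow

end

open scoped Classical in
lemma aux_ker (p m : ℕ) [Fact p.Prime] (hm : 0 < m) (F : Type*) [Field F] [Fintype F]
    [Algebra (ZMod p) F] (hF : Fintype.card F = p ^ m) :
    (univ.filter fun y : F => Algebra.trace (ZMod p) F y = 0).card = p ^ (m - 1) := by
  haveI := Algebra.IsAlgebraic.of_finite (ZMod p) F
  have hex : ∃ b0 : F, Algebra.trace (ZMod p) F b0 ≠ 0 := by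
    by_contra h
    push_neg at h
    exact Algebra.trace_ne_zero (ZMod p) F (LinearMap.ext fun y => by simpa using h y)
  obtain ⟨b0, hb0⟩ := hex
  have hsurj : ∀ c : ZMod p, ∃ x : F, Algebra.trace (ZMod p) F x = c := by
    intro c
    refine ⟨(c * (Algebra.trace (ZMod p) F b0)⁻¹) • b0, ?_⟩
    rw [map_smul, smul_eq_mul]
    field_simp
  have hcards : ∀ c : ZMod p,
      (univ.filter fun y : F => Algebra.trace (ZMod p) F y = c).card =
      (univ.filter fun y : F => Algebra.trace (ZMod p) F y = 0).card := by
    intro c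
    obtain ⟨xc, hxc⟩ := hsurj c
    refine Finset.card_bij' (fun y _ => y - xc) (fun y _ => y + xc) ?_ ?_ ?_ ?_
    · intro a ha
      simp only [mem_filter, mem_univ, true_and] at ha ⊢
      rw [map_sub, ha, hxc, sub_self]
    · intro a ha
      simp only [mem_filter, mem_univ, true_and] at ha ⊢
      rw [map_add, ha, hxc, zero_add]
    · intro a _; ring
    · intro a _; ring
  have htot : (univ : Finset F).card =
      ∑ c : ZMod p, (univ.filter fun y : F => Algebra.trace (ZMod p) F y = c).card :=
    Finset.card_eq_sum_card_fiberwise (fun x _ => mem_univ _)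
  rw [Finset.card_univ, hF] at htot
  simp only [hcards] at htot
  rw [Finset.sum_const, Finset.card_univ, ZMod.card, smul_eq_mul] at htot
  have hps : p ^ m = p * p ^ (m - 1) := by
    conv_lhs => rw [show m = (m - 1) + 1 by omega]
    rw [pow_succ']
  rw [hps] at htot
  exact (Nat.eq_of_mul_eq_mul_left (Fact.out : p.Prime).pos htot).symm

open scoped Classical in
lemma aux_fiber (F : Type*) [Field F] [Fintype F] (hchar2 : ringChar F ≠ 2)
    (a : ℕ) (ha0 : 0 < a) (ha2 : 2 ∣ a)
    (hgcd : Nat.gcd a (Fintype.card F - 1) = 2) (y : F) :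
    (univ.filter fun x : F => x ^ a = y).card =
      if y = 0 then 1 else if IsSquare y then 2 else 0 := by
  set n := Fintype.card F - 1 with hn
  by_cases hy0 : y = 0
  · rw [if_pos hy0]
    have h1 : (univ.filter fun x : F => x ^ a = y) = {0} := by
      ext x
      simp [hy0, pow_eq_zero_iff ha0.ne']
    rw [h1, card_singleton]
  rw [if_neg hy0]
  by_cases hsq : IsSquare y
  · rw [if_pos hsq]
    obtain ⟨z, hz⟩ := hsq
    have hz0 : z ≠ 0 := by rintro rfl; simp at hz; exact hy0 hz
    set zu : Fˣ := Units.mk0 z hz0 with hzu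
    set α := Nat.gcdA a n with hα
    set β := Nat.gcdB a n with hβ
    have hbez : (2 : ℤ) = a * α + n * β := by
      have := Nat.gcd_eq_gcd_ab a n
      rw [hgcd] at this
      exact_mod_cast this
    have hcardu : Fintype.card Fˣ = n := by rw [hn, Fintype.card_units]
    have hunit_pow : ∀ t : Fˣ, t ^ (n : ℤ) = 1 := fun t => by
      rw [zpow_natCast, ← hcardu, pow_card_eq_one]
    set w : F := ((zu ^ α : Fˣ) : F) with hw
    have hw0 : w ≠ 0 := Units.ne_zero _
    have h2 : (zu ^ α) ^ (a : ℤ) = zu ^ (2 : ℤ) := by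
      rw [← zpow_mul, hbez, zpow_add, zpow_mul zu (n : ℤ) β, hunit_pow, one_zpow, mul_one,
        mul_comm α (a : ℤ)]
    have h5 : ((zu ^ α) ^ (a : ℤ)) = (zu ^ α) ^ a := zpow_natCast _ a
    have hwa : w ^ a = y := by
      have h6 := congrArg Units.val (h5.symm.trans h2)
      rw [Units.val_pow_eq_pow_val] at h6
      rw [hw, h6]
      show ((zu ^ (2 : ℤ) : Fˣ) : F) = y
      rw [show ((2 : ℤ)) = ((2 : ℕ) : ℤ) by norm_num, zpow_natCast, Units.val_pow_eq_pow_val,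
        hzu, Units.val_mk0, pow_two]
      exact hz.symm
    have hkey : (univ.filter fun x : F => x ^ a = y) = {w, -w} := by
      ext x
      simp only [mem_filter, mem_univ, true_and, mem_insert, mem_singleton]
      constructor
      · intro hx
        have hx0 : x ≠ 0 := by rintro rfl; rw [zero_pow ha0.ne'] at hx; exact hy0 hx.symm
        set t : F := x / w with htdef
        have ht0 : t ≠ 0 := div_ne_zero hx0 hw0
        have hta : t ^ a = 1 := by
          rw [htdef, div_pow, hx, hwa, div_self hy0]
        have ht2 : t ^ 2 = 1 := by
          set tu : Fˣ := Units.mk0 t ht0 with htu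
          have htua : tu ^ a = 1 := by
            apply Units.ext
            rw [Units.val_pow_eq_pow_val, htu, Units.val_mk0, hta, Units.val_one]
          have htuaz : tu ^ (a : ℤ) = 1 := by rw [zpow_natCast, htua]
          have h7 : tu ^ (2 : ℤ) = 1 := by
            rw [hbez, zpow_add, zpow_mul, zpow_mul, htuaz, one_zpow, hunit_pow, one_zpow, one_mul]
          have h8 : tu ^ (2 : ℕ) = 1 := by
            rw [← zpow_natCast tu 2]
            exact_mod_cast h7
          have h9 := congrArg Units.val h8
          rwa [Units.val_pow_eq_pow_val, htu, Units.val_mk0, Units.val_one] at h9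
        have := mul_self_eq_one_iff.mp (show t * t = 1 by rw [← pow_two]; exact ht2)
        rcases this with h | h
        · left
          rw [htdef, div_eq_one_iff_eq hw0] at h
          exact h
        · right
          have : x = t * w := by rw [htdef, div_mul_cancel₀ x hw0]
          rw [this, h]; ring
      · rintro (rfl | rfl)
        · exact hwa
        · rw [Even.neg_pow ⟨a/2, by omega⟩, hwa]
    rw [hkey]
    rw [card_insert_of_notMem, card_singleton]
    simp only [mem_singleton]
    intro h
    have h2 : (2 : F) * w = 0 := by rw [two_mul]; nth_rewrite 1 [h]; ring
    have h20 : (2 : F) ≠ 0 := Ring.two_ne_zero hchar2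
    exact hw0 (by simpa [h20] using h2)
  · rw [if_neg hsq]
    rw [Finset.card_eq_zero]
    ext x
    simp only [mem_filter, mem_univ, true_and, notMem_empty, iff_false]
    intro hx
    obtain ⟨b, hb⟩ := ha2
    exact hsq ⟨x ^ b, by rw [← hx, hb, mul_comm 2 b, pow_mul, pow_two]⟩

open scoped Classical in
lemma aux_invol (p m : ℕ) [Fact p.Prime] (hp : Odd p) (hm : Odd m) (F : Type*) [Field F]
    [Fintype F] [Algebra (ZMod p) F] (hF : Fintype.card F = p ^ m) :
    (((univ.filter fun y : F => Algebra.trace (ZMod p) F y = 0).erase 0).filter IsSquare).card =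
    (((univ.filter fun y : F => Algebra.trace (ZMod p) F y = 0).erase 0).filter
      (fun y => ¬ IsSquare y)).card := by
  obtain ⟨c, hc0, hC0, hCpow⟩ := aux_ns p m F hp hm hF
  set C := algebraMap (ZMod p) F c with hCdef
  set e := (p ^ m - 1) / 2 with he
  have hchar2 : ringChar F ≠ 2 := aux_ringChar p F hp
  have hneg : (-1 : F) ≠ 1 := by
    intro h
    exact Ring.neg_one_ne_one_of_char_ne_two hchar2 h
  have hCinv : C⁻¹ ^ e = -1 := by
    rw [inv_pow, hCpow, inv_neg, inv_one]
  have htr : ∀ y : F, Algebra.trace (ZMod p) F y = 0 →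
      Algebra.trace (ZMod p) F (C * y) = 0 := by
    intro y hy
    rw [hCdef, ← Algebra.smul_def, map_smul, hy, smul_zero]
  have htr' : ∀ y : F, Algebra.trace (ZMod p) F y = 0 →
      Algebra.trace (ZMod p) F (C⁻¹ * y) = 0 := by
    intro y hy
    rw [hCdef, ← map_inv₀, ← Algebra.smul_def, map_smul, hy, smul_zero]
  have hCinv0 : C⁻¹ ≠ 0 := inv_ne_zero hC0
  refine Finset.card_bij' (fun y _ => C * y) (fun y _ => C⁻¹ * y) ?_ ?_ ?_ ?_
  · intro y hy
    simp only [mem_filter, mem_erase, mem_univ, true_and] at hy ⊢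
    obtain ⟨⟨hy0, hytr⟩, hysq⟩ := hy
    refine ⟨⟨mul_ne_zero hC0 hy0, htr y hytr⟩, ?_⟩
    intro hsq
    have h1 : (C * y) ^ e = 1 := (aux_sq_iff p m F hp hF (mul_ne_zero hC0 hy0)).mp hsq
    have h2 : y ^ e = 1 := (aux_sq_iff p m F hp hF hy0).mp hysq
    rw [mul_pow, hCpow, h2, mul_one] at h1
    exact hneg h1
  · intro y hy
    simp only [mem_filter, mem_erase, mem_univ, true_and] at hy ⊢
    obtain ⟨⟨hy0, hytr⟩, hysq⟩ := hy
    refine ⟨⟨mul_ne_zero hCinv0 hy0, htr' y hytr⟩, ?_⟩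
    have hye : y ^ e = -1 := by
      have hhalf : Fintype.card F / 2 = e := by
        have hodd : Odd (p ^ m) := hp.pow
        rw [hF, he]
        obtain ⟨k, hk⟩ := hodd
        omega
      have hd := FiniteField.pow_dichotomy hchar2 hy0
      rw [hhalf] at hd
      exact hd.resolve_left (fun h => hysq ((aux_sq_iff p m F hp hF hy0).mpr h))
    apply (aux_sq_iff p m F hp hF (mul_ne_zero hCinv0 hy0)).mpr
    rw [mul_pow, hCinv, hye]
    ring
  · intro y _
    show C⁻¹ * (C * y) = y
    rw [← mul_assoc, inv_mul_cancel₀ hC0, one_mul]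
  · intro y _
    show C * (C⁻¹ * y) = y
    rw [← mul_assoc, mul_inv_cancel₀ hC0, one_mul]

open scoped Classical in
theorem stmt_7 (p m u : ℕ) [Fact p.Prime] (hp : Odd p) (hm : Odd m) (hu : 0 < u)
    (F : Type*) [Field F] [Fintype F] [Algebra (ZMod p) F]
    (hF : Fintype.card F = p ^ m) :
    (Finset.univ.filter (fun x : F =>
        Algebra.trace (ZMod p) F (x ^ (p ^ u + 1)) = 0)).card = p ^ (m - 1) := by
  classical
  have hppr : p.Prime := Fact.out
  have hp1 : 1 < p := hppr.one_lt
  have hm0 : 0 < m := hm.pos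
  set a := p ^ u + 1 with ha
  have hchar2 : ringChar F ≠ 2 := aux_ringChar p F hp
  have hgcd : Nat.gcd a (Fintype.card F - 1) = 2 := by
    rw [hF]
    exact aux_gcd p m u hp hp1 hm hu
  have ha0 : 0 < a := by positivity
  have ha2 : 2 ∣ a := by
    have : Odd (p ^ u) := hp.pow
    obtain ⟨k, hk⟩ := this
    exact ⟨k + 1, by omega⟩
  set K := univ.filter (fun y : F => Algebra.trace (ZMod p) F y = 0) with hK
  have hKcard : K.card = p ^ (m - 1) := aux_ker p m hm0 F hF
  have hstep : (univ.filter (fun x : F => Algebra.trace (ZMod p) F (x ^ a) = 0)).card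
      = ∑ y ∈ K, (univ.filter fun x : F => x ^ a = y).card := by
    rw [Finset.card_eq_sum_card_fiberwise (f := fun x : F => x ^ a) (t := K)
      (fun x hx => by
        simp only [hK, mem_coe, mem_filter, mem_univ, true_and] at hx ⊢
        exact hx)]
    apply Finset.sum_congr rfl
    intro y hy
    congr 1
    ext x
    simp only [mem_filter, mem_univ, true_and]
    constructor
    · rintro ⟨_, h2⟩
      exact h2
    · intro h2
      refine ⟨?_, h2⟩
      rw [h2]
      exact (mem_filter.mp hy).2
  have hfib : ∀ y ∈ K, (univ.filter fun x : F => x ^ a = y).card =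
      if y = 0 then 1 else if IsSquare y then 2 else 0 :=
    fun y _ => aux_fiber F hchar2 a ha0 ha2 hgcd y
  rw [hstep, Finset.sum_congr rfl hfib]
  have h0K : (0 : F) ∈ K := by
    simp [hK]
  rw [← Finset.add_sum_erase K _ h0K]
  rw [if_pos rfl]
  have hrest : ∑ y ∈ K.erase 0, (if y = 0 then 1 else if IsSquare y then 2 else 0)
      = ∑ y ∈ K.erase 0, (if IsSquare y then 2 else 0) := by
    apply Finset.sum_congr rfl
    intro y hy
    rw [if_neg (Finset.mem_erase.mp hy).1]
  rw [hrest, Finset.sum_ite, Finset.sum_const, Finset.sum_const, smul_eq_mul, smul_eq_mul,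
    mul_zero, add_zero, mul_comm]
  have hAB := aux_invol p m hp hm F hF
  rw [← hK] at hAB
  have hsplit : ((K.erase 0).filter IsSquare).card + ((K.erase 0).filter (fun y => ¬ IsSquare y)).card
      = (K.erase 0).card := Finset.card_filter_add_card_filter_not _
  have hffi : (K.erase 0).filter (fun x => IsSquare x) = (K.erase 0).filter IsSquare := rfl
  rw [hffi]
  have hKe : (K.erase 0).card = p ^ (m - 1) - 1 := by
    rw [Finset.card_erase_of_mem h0K, hKcard]
  have hpm1 : 1 ≤ p ^ (m - 1) := Nat.one_le_pow _ _ (by omega)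
  omega
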